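/- Fix t > 1 and ε > 0, let τ := inf{n ≥ 0 : W_n > t}, and let f_ε(x) := (x/ε − 1) ∧ 1 for x ≥ 0. Then for every n ∈ ℕ, ℙ(W_n > t ε) ≥ ℙ(τ ≤ n) · inf_{k ∈ ℕ} E[f_ε(W_k)]. -/

import Mathlib

open MeasureTheory ProbabilityTheory Filter Topology

noncomputable section

namespace DirectedPolymer

variable {Ω : Type*} [MeasurableSpace Ω]

/-- The nearest-neighbor step in `ℤ^d` in direction `e.1`, forward if `e.2 = true`,
backward otherwise. -/
def step (d : ℕ) (e : Fin d × Bool) : Fin d → ℤ :=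
  Pi.single e.1 (if e.2 then 1 else -1)

/-- The position, after `k` steps, of the nearest-neighbor path started at the origin whose
successive steps are encoded by `σ`. -/
def walkPos {d n : ℕ} (σ : Fin n → Fin d × Bool) (k : ℕ) : Fin d → ℤ :=
  ∑ j : Fin n, if (j : ℕ) < k then step d (σ j) else 0

/-- The logarithmic moment generating function `λ(β) = log E[exp (β ω(1,0))]`. -/
def logMGF {d : ℕ} (P : Measure Ω) (env : ℕ × (Fin d → ℤ) → Ω → ℝ) (β : ℝ) : ℝ :=
  Real.log (∫ x, Real.exp (β * env (1, 0) x) ∂P)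

/-- The renormalized partition function `W_n` of the directed polymer: the expectation, over the
simple random walk `(S_i)` on `ℤ^d` started at the origin (uniform choice among the `2d`
neighbors at each step), of `exp (β ∑_{i=1}^n ω(i, S_i) - n λ(β))`. -/
def W {d : ℕ} (P : Measure Ω) (env : ℕ × (Fin d → ℤ) → Ω → ℝ) (β : ℝ) (n : ℕ) (x : Ω) : ℝ :=
  (2 * d : ℝ)⁻¹ ^ n * ∑ σ : Fin n → Fin d × Bool,
    Real.exp (β * ∑ i : Fin n, env ((i : ℕ) + 1, walkPos σ ((i : ℕ) + 1)) x
      - n * logMGF P env β)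

/-- The environment `ω = env` is a family of i.i.d. random variables, indexed by space-time
`ℕ × ℤ^d`, having all exponential moments: `E[exp (b |ω(1,0)|)] < ∞` for all `b ≥ 0`. -/
structure IsIIDEnv {d : ℕ} (P : Measure Ω) (env : ℕ × (Fin d → ℤ) → Ω → ℝ) : Prop where
  meas : ∀ p, Measurable (env p)
  indep : iIndepFun env P
  ident : ∀ p, IdentDistrib (env p) (env (1, 0)) P P
  expMom : ∀ b : ℝ, 0 ≤ b → Integrable (fun x => Real.exp (b * |env (1, 0) x|)) P

/-- The filtration `F_n = σ(ω(i,x) : i ≤ n, x ∈ ℤ^d)` generated by the environment. -/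
def envFiltration {d : ℕ} (env : ℕ × (Fin d → ℤ) → Ω → ℝ)
    (hmeas : ∀ p, Measurable (env p)) :
    Filtration ℕ (inferInstance : MeasurableSpace Ω) where
  seq n := ⨆ p ∈ {p : ℕ × (Fin d → ℤ) | p.1 ≤ n}, MeasurableSpace.comap (env p) inferInstance
  mono' := by
    intro i j hij
    exact iSup₂_le fun p hp => le_iSup₂_of_le p (le_trans hp hij) le_rfl
  le' n := iSup₂_le fun p _ => (hmeas p).comap_le


/-- The polymer measure of the event `{S_n = y}`, multiplied by `W_n`:
`W_n · μ_{n,β}(S_n = y)`. -/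
def polymerMass {d : ℕ} (P : Measure Ω) (env : ℕ × (Fin d → ℤ) → Ω → ℝ) (β : ℝ) (n : ℕ)
    (y : Fin d → ℤ) (x : Ω) : ℝ :=
  (2 * d : ℝ)⁻¹ ^ n * ∑ σ : Fin n → Fin d × Bool,
    if walkPos σ n = y then
      Real.exp (β * ∑ i : Fin n, env ((i : ℕ) + 1, walkPos σ ((i : ℕ) + 1)) x
        - n * logMGF P env β)
    else 0

/-- The space-time shift `θ_{n,y}` of the environment: `(θ_{n,y} ω)(·,·) = ω(n + ·, y + ·)`. -/
def shiftEnv {d : ℕ} (n : ℕ) (y : Fin d → ℤ) (env : ℕ × (Fin d → ℤ) → Ω → ℝ) :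
    ℕ × (Fin d → ℤ) → Ω → ℝ :=
  fun p => env (n + p.1, y + p.2)

/-- The hitting time `inf {n ≥ 0 : t < g n x}` of `(t, ∞)`, with value `⊤ = ∞` if the
process never exceeds `t`. -/
def hitAbove (g : ℕ → Ω → ℝ) (t : ℝ) (x : Ω) : ℕ∞ :=
  sInf {m : ℕ∞ | ∃ k : ℕ, m = (k : ℕ∞) ∧ t < g k x}

/-- The hitting time `inf {n ≥ 0 : g n x ≤ s}` of `(-∞, s]`, with value `⊤ = ∞` if the
process never goes below `s`. -/
def hitBelow (g : ℕ → Ω → ℝ) (s : ℝ) (x : Ω) : ℕ∞ :=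
  sInf {m : ℕ∞ | ∃ k : ℕ, m = (k : ℕ∞) ∧ g k x ≤ s}

/-! ### auxiliary -/

/-- The truncation function `f_ε`. -/
def fE (ε : ℝ) (z : ℝ) : ℝ := min (z / ε - 1) 1

lemma concaveOn_fE (ε : ℝ) : ConcaveOn ℝ Set.univ (fE ε) := by
  have h1 : ConcaveOn ℝ Set.univ (fun z : ℝ => z / ε - 1) := by
    refine ⟨convex_univ, fun x _ y _ a b _ _ hab => le_of_eq ?_⟩
    simp only [smul_eq_mul, div_eq_mul_inv]
    linear_combination -hab
  have h2 : ConcaveOn ℝ Set.univ (fun _ : ℝ => (1 : ℝ)) := concaveOn_const 1 convex_univ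
  exact h1.inf h2

lemma fE_le_one (ε z : ℝ) : fE ε z ≤ 1 := min_le_right _ _

lemma neg_one_le_fE {ε z : ℝ} (hε : 0 < ε) (hz : 0 ≤ z) : -1 ≤ fE ε z := by
  have : (0:ℝ) ≤ z / ε := div_nonneg hz hε.le
  simp only [fE, le_min_iff]
  constructor <;> linarith

lemma abs_fE_le_one {ε z : ℝ} (hε : 0 < ε) (hz : 0 ≤ z) : |fE ε z| ≤ 1 :=
  abs_le.2 ⟨neg_one_le_fE hε hz, fE_le_one ε z⟩

lemma measurable_fE (ε : ℝ) : Measurable (fE ε) :=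
  ((measurable_id.div_const ε).sub_const 1).min measurable_const

lemma fE_pos_imp {ε z : ℝ} (hε : 0 < ε) (h : 0 < fE ε z) : ε < z := by
  have h1 : 0 < z / ε - 1 := lt_of_lt_of_le h (min_le_left _ _)
  have h2 : 1 < z / ε := by linarith
  exact (one_lt_div hε).mp h2

section WalkLemmas

variable {d k m : ℕ}

lemma walkPos_append_left (σ₁ : Fin k → Fin d × Bool) (σ₂ : Fin m → Fin d × Bool)
    {j : ℕ} (hj : j ≤ k) : walkPos (Fin.append σ₁ σ₂) j = walkPos σ₁ j := by
  unfold walkPos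
  rw [Fin.sum_univ_add]
  have h2 : (∑ i : Fin m, if ((Fin.natAdd k i : Fin (k+m)) : ℕ) < j
      then step d (Fin.append σ₁ σ₂ (Fin.natAdd k i)) else 0) = 0 := by
    apply Finset.sum_eq_zero
    intro i _
    rw [if_neg]
    simp only [Fin.coe_natAdd]
    omega
  rw [h2, add_zero]
  apply Finset.sum_congr rfl
  intro i _
  simp [Fin.append_left]

lemma walkPos_self (σ₁ : Fin k → Fin d × Bool) :
    walkPos σ₁ k = ∑ i : Fin k, step d (σ₁ i) := by
  unfold walkPos
  apply Finset.sum_congr rfl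
  intro i _
  rw [if_pos i.isLt]

lemma walkPos_append_right (σ₁ : Fin k → Fin d × Bool) (σ₂ : Fin m → Fin d × Bool)
    (j : ℕ) : walkPos (Fin.append σ₁ σ₂) (k + j) = walkPos σ₁ k + walkPos σ₂ j := by
  unfold walkPos
  rw [Fin.sum_univ_add]
  congr 1
  · apply Finset.sum_congr rfl
    intro i _
    simp only [Fin.coe_castAdd, Fin.append_left]
    rw [if_pos (by omega : (i:ℕ) < k + j), if_pos i.isLt]
  · apply Finset.sum_congr rfl
    intro i _
    simp only [Fin.coe_natAdd, Fin.append_right]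
    by_cases h : (i : ℕ) < j
    · rw [if_pos (by omega), if_pos h]
    · rw [if_neg (by omega), if_neg h]

end WalkLemmas

section WLemmas

variable {d : ℕ} (P : Measure Ω) (env : ℕ × (Fin d → ℤ) → Ω → ℝ) (β : ℝ)

/-- The weight of an initial path segment. -/
def wgt (k : ℕ) (σ₁ : Fin k → Fin d × Bool) (x : Ω) : ℝ :=
  (2 * d : ℝ)⁻¹ ^ k *
    Real.exp (β * ∑ i : Fin k, env ((i : ℕ) + 1, walkPos σ₁ ((i : ℕ) + 1)) x
      - k * logMGF P env β)

lemma sum_wgt (k : ℕ) (x : Ω) :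
    ∑ σ₁ : Fin k → Fin d × Bool, wgt P env β k σ₁ x = W P env β k x := by
  unfold wgt W
  rw [Finset.mul_sum]

lemma wgt_pos (hd : 0 < d) (k : ℕ) (σ₁ : Fin k → Fin d × Bool) (x : Ω) :
    0 < wgt P env β k σ₁ x := by
  apply mul_pos (pow_pos _ _) (Real.exp_pos _)
  rw [inv_pos]
  positivity

lemma W_pos (hd : 0 < d) (k : ℕ) (x : Ω) : 0 < W P env β k x := by
  rw [← sum_wgt]
  have : Nonempty (Fin d × Bool) := ⟨⟨⟨0, hd⟩, true⟩⟩
  exact Finset.sum_pos (fun σ _ => wgt_pos P env β hd k σ x) Finset.univ_nonempty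

lemma W_zero (x : Ω) : W P env β 0 x = 1 := by
  simp [W]

lemma logMGF_shift (henv : IsIIDEnv P env) (k : ℕ) (y : Fin d → ℤ) :
    logMGF P (shiftEnv k y env) β = logMGF P env β := by
  unfold logMGF
  congr 1
  have hmeas : Measurable fun r : ℝ => Real.exp (β * r) :=
    Real.measurable_exp.comp (measurable_const.mul measurable_id)
  have h := ((henv.ident (k + 1, y + 0)).comp hmeas).integral_eq
  simpa [shiftEnv, Function.comp] using h

end WLemmas

section Decomp

variable {d : ℕ} (P : Measure Ω) (env : ℕ × (Fin d → ℤ) → Ω → ℝ) (β : ℝ)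

lemma W_decomp (henv : IsIIDEnv P env) (k m : ℕ) (x : Ω) :
    W P env β (k + m) x
      = ∑ σ₁ : Fin k → Fin d × Bool,
          wgt P env β k σ₁ x * W P (shiftEnv k (walkPos σ₁ k) env) β m x := by
  unfold W wgt
  simp only [logMGF_shift P env β henv, shiftEnv]
  rw [← Equiv.sum_comp (Fin.appendEquiv (α := Fin d × Bool) k m), Fintype.sum_prod_type,
    Finset.mul_sum]
  apply Finset.sum_congr rfl
  intro σ₁ _
  have key : ∀ σ₂ : Fin m → Fin d × Bool,
      (2 * (d : ℝ))⁻¹ ^ (k + m) *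
        Real.exp (β * ∑ i : Fin (k + m),
            env ((i : ℕ) + 1, walkPos (Fin.appendEquiv k m (σ₁, σ₂)) ((i : ℕ) + 1)) x
          - (k + m : ℕ) * logMGF P env β)
      = ((2 * (d : ℝ))⁻¹ ^ k *
          Real.exp (β * ∑ i : Fin k, env ((i : ℕ) + 1, walkPos σ₁ ((i : ℕ) + 1)) x
            - k * logMGF P env β)) *
        ((2 * (d : ℝ))⁻¹ ^ m *
          Real.exp (β * ∑ i : Fin m, env (k + ((i : ℕ) + 1),
              walkPos σ₁ k + walkPos σ₂ ((i : ℕ) + 1)) x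
            - m * logMGF P env β)) := by
    intro σ₂
    have happ : walkPos (Fin.appendEquiv k m (σ₁, σ₂)) = walkPos (Fin.append σ₁ σ₂) := rfl
    rw [happ]
    have h1 : ∑ i : Fin (k + m),
          env ((i : ℕ) + 1, walkPos (Fin.append σ₁ σ₂) ((i : ℕ) + 1)) x
        = (∑ i : Fin k, env ((i : ℕ) + 1, walkPos σ₁ ((i : ℕ) + 1)) x)
          + ∑ i : Fin m, env (k + ((i : ℕ) + 1),
              walkPos σ₁ k + walkPos σ₂ ((i : ℕ) + 1)) x := by
      rw [Fin.sum_univ_add]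
      congr 1
      · apply Finset.sum_congr rfl
        intro i _
        simp only [Fin.coe_castAdd]
        rw [walkPos_append_left σ₁ σ₂ (by have := i.isLt; omega)]
      · apply Finset.sum_congr rfl
        intro i _
        simp only [Fin.coe_natAdd]
        rw [add_assoc, walkPos_append_right σ₁ σ₂ ((i : ℕ) + 1)]
    rw [h1]
    have h2 : β * ((∑ i : Fin k, env ((i : ℕ) + 1, walkPos σ₁ ((i : ℕ) + 1)) x)
          + ∑ i : Fin m, env (k + ((i : ℕ) + 1),
              walkPos σ₁ k + walkPos σ₂ ((i : ℕ) + 1)) x)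
        - ((k + m : ℕ) : ℝ) * logMGF P env β
        = (β * (∑ i : Fin k, env ((i : ℕ) + 1, walkPos σ₁ ((i : ℕ) + 1)) x)
            - k * logMGF P env β)
          + (β * (∑ i : Fin m, env (k + ((i : ℕ) + 1),
              walkPos σ₁ k + walkPos σ₂ ((i : ℕ) + 1)) x)
            - m * logMGF P env β) := by
      push_cast
      ring
    rw [h2, Real.exp_add, pow_add]
    ring
  rw [Finset.mul_sum, Finset.sum_congr rfl (fun σ₂ _ => key σ₂), ← Finset.mul_sum,
    ← Finset.mul_sum]

end Decomp
section Meas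

variable {d : ℕ} (P : Measure Ω) (β : ℝ)

lemma measurable_W' {Ω' : Type*} {mΩ : MeasurableSpace Ω'} {m' : MeasurableSpace Ω'}
    {d : ℕ} (P : @Measure Ω' mΩ) (env' : ℕ × (Fin d → ℤ) → Ω' → ℝ) (β : ℝ) (n : ℕ)
    (h : ∀ i : ℕ, ∀ z, 1 ≤ i → i ≤ n → Measurable[m'] (env' (i, z))) :
    Measurable[m'] (@W Ω' mΩ d P env' β n) := by
  unfold W
  refine Measurable.const_mul ?_ _
  refine Finset.measurable_sum _ fun σ _ => Real.measurable_exp.comp ?_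
  refine Measurable.sub ?_ measurable_const
  refine Measurable.const_mul ?_ β
  exact Finset.measurable_sum _ fun i _ =>
    h ((i : ℕ) + 1) _ (by omega) (by have := i.isLt; omega)

lemma measurable_wgt {Ω' : Type*} {mΩ : MeasurableSpace Ω'} {m' : MeasurableSpace Ω'}
    {d : ℕ} (P : @Measure Ω' mΩ) (env' : ℕ × (Fin d → ℤ) → Ω' → ℝ) (β : ℝ) (k : ℕ)
    (σ₁ : Fin k → Fin d × Bool)
    (h : ∀ i : ℕ, ∀ z, 1 ≤ i → i ≤ k → Measurable[m'] (env' (i, z))) :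
    Measurable[m'] (@wgt Ω' mΩ d P env' β k σ₁) := by
  unfold wgt
  refine Measurable.const_mul (Real.measurable_exp.comp ?_) _
  refine Measurable.sub ?_ measurable_const
  refine Measurable.const_mul ?_ β
  exact Finset.measurable_sum _ fun i _ =>
    h ((i : ℕ) + 1) _ (by omega) (by have := i.isLt; omega)

lemma measurable_env_biSup {env : ℕ × (Fin d → ℤ) → Ω → ℝ} (hmeas : ∀ p, Measurable (env p))
    {s : Set (ℕ × (Fin d → ℤ))} {p} (hp : p ∈ s) :
    Measurable[⨆ q ∈ s, MeasurableSpace.comap (env q) inferInstance] (env p) := by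
  have h1 : Measurable[MeasurableSpace.comap (env p) inferInstance] (env p) :=
    measurable_iff_comap_le.mpr le_rfl
  exact h1.mono (le_iSup₂ (f := fun q _ => MeasurableSpace.comap (env q) inferInstance) p hp)
    le_rfl

lemma map_eval_eq_pi [IsProbabilityMeasure P] {I : Type*} {X : I → Ω → ℝ}
    (hX : ∀ i, Measurable (X i)) (hindep : iIndepFun X P)
    {ι : Type*} [Fintype ι] [DecidableEq ι] [DecidableEq I] (g : ι → I)
    (hg : Function.Injective g) :
    Measure.map (fun x (a : ι) => X (g a) x) P
      = Measure.pi (fun a => Measure.map (X (g a)) P) := by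
  have hmap : ∀ a : ι, IsProbabilityMeasure (Measure.map (X (g a)) P) :=
    fun a => Measure.isProbabilityMeasure_map (hX (g a)).aemeasurable
  refine (Measure.pi_eq fun s hs => ?_).symm
  rw [Measure.map_apply (measurable_pi_lambda _ fun a => hX (g a)) (MeasurableSet.univ_pi hs)]
  classical
  set sets : I → Set ℝ := fun i => if h : ∃ a, g a = i then s h.choose else Set.univ
    with hsets_def
  have hsets : ∀ a : ι, sets (g a) = s a := by
    intro a
    have h : ∃ a', g a' = g a := ⟨a, rfl⟩
    simp only [hsets_def, dif_pos h]
    rw [hg h.choose_spec]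
  have hpre : (fun x (a : ι) => X (g a) x) ⁻¹' Set.pi Set.univ s
      = ⋂ i ∈ Finset.image g Finset.univ, X i ⁻¹' sets i := by
    ext x
    simp only [Set.mem_preimage, Set.mem_pi, Set.mem_univ, true_implies, Set.mem_iInter,
      Finset.mem_image, Finset.mem_univ, true_and]
    constructor
    · rintro h i ⟨a, rfl⟩
      rw [hsets]; exact h a
    · intro h a
      rw [← hsets a]; exact h (g a) ⟨a, rfl⟩
  have hmeassets : ∀ i ∈ Finset.image g Finset.univ, MeasurableSet (sets i) := by
    intro i hi
    obtain ⟨a, _, rfl⟩ := Finset.mem_image.mp hi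
    rw [hsets]; exact hs a
  have key := hindep.measure_inter_preimage_eq_mul (Finset.image g Finset.univ)
    (sets := sets) hmeassets
  rw [hpre, key, Finset.prod_image (fun a _ b _ h => hg h)]
  refine Finset.prod_congr rfl fun a _ => ?_
  rw [hsets, Measure.map_apply (hX (g a)) (hs a)]

end Meas
section Ident

variable {d : ℕ} (P : Measure Ω) (β : ℝ)

lemma identDistrib_W_shift [IsProbabilityMeasure P] {env : ℕ × (Fin d → ℤ) → Ω → ℝ}
    (henv : IsIIDEnv P env) (k m : ℕ) (y : Fin d → ℤ) :
    IdentDistrib (W P (shiftEnv k y env) β m) (W P env β m) P P := by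
  classical
  set j : Fin m × (Fin m → Fin d × Bool) → ℕ × (Fin d → ℤ) :=
    fun a => ((a.1 : ℕ) + 1, walkPos a.2 ((a.1 : ℕ) + 1)) with hj_def
  set T : Finset (ℕ × (Fin d → ℤ)) := Finset.image j Finset.univ with hT_def
  set sft : ℕ × (Fin d → ℤ) → ℕ × (Fin d → ℤ) := fun p => (k + p.1, y + p.2) with hsft_def
  have hsft_inj : Function.Injective sft := by
    intro p q h
    simp only [hsft_def, Prod.mk.injEq] at h
    exact Prod.ext (by omega) (by have := h.2; ext i; have := congrFun this i; simpa using this)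
  set V : Ω → ↥T → ℝ := fun x a => env a.val x with hV_def
  set V' : Ω → ↥T → ℝ := fun x a => env (sft a.val) x with hV'_def
  have hmapV : Measure.map V P = Measure.pi fun a : T => Measure.map (env a.val) P :=
    map_eval_eq_pi P henv.meas henv.indep Subtype.val Subtype.val_injective
  have hmapV' : Measure.map V' P
      = Measure.pi fun a : T => Measure.map (env (sft a.val)) P :=
    map_eval_eq_pi P henv.meas henv.indep (fun a : T => sft a.val)
      (hsft_inj.comp Subtype.val_injective)
  have hmargs : ∀ p : ℕ × (Fin d → ℤ), Measure.map (env p) P = Measure.map (env (1, 0)) P :=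
    fun p => (henv.ident p).map_eq
  have hVmeas : Measurable V := measurable_pi_lambda _ fun a => henv.meas _
  have hV'meas : Measurable V' := measurable_pi_lambda _ fun a => henv.meas _
  have hVid : IdentDistrib V' V P P := by
    refine ⟨hV'meas.aemeasurable, hVmeas.aemeasurable, ?_⟩
    rw [hmapV, hmapV']
    congr 1
    funext a
    rw [hmargs (sft a.val), hmargs a.val]
  set F : (↥T → ℝ) → ℝ := fun u =>
    (2 * (d : ℝ))⁻¹ ^ m * ∑ σ : Fin m → Fin d × Bool,
      Real.exp (β * ∑ i : Fin m,
          u ⟨j (i, σ), Finset.mem_image_of_mem j (Finset.mem_univ _)⟩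
        - m * logMGF P env β) with hF_def
  have hFmeas : Measurable F := by
    refine Measurable.const_mul ?_ _
    refine Finset.measurable_sum _ fun σ _ => Real.measurable_exp.comp ?_
    refine Measurable.sub ?_ measurable_const
    refine Measurable.const_mul ?_ β
    exact Finset.measurable_sum _ fun i _ => measurable_pi_apply _
  have h := hVid.comp hFmeas
  have hFV : F ∘ V = W P env β m := rfl
  have hFV' : F ∘ V' = W P (shiftEnv k y env) β m := by
    funext x
    show F (V' x) = _
    unfold W
    rw [logMGF_shift P env β henv]
    rfl
  rw [hFV, hFV'] at h
  exact h

lemma integral_fE_W_shift [IsProbabilityMeasure P] {env : ℕ × (Fin d → ℤ) → Ω → ℝ}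
    (henv : IsIIDEnv P env) (ε : ℝ) (k m : ℕ) (y : Fin d → ℤ) :
    ∫ x, fE ε (W P (shiftEnv k y env) β m x) ∂P = ∫ x, fE ε (W P env β m x) ∂P :=
  ((identDistrib_W_shift P β henv k m y).comp (measurable_fE ε)).integral_eq

end Ident
section Key

/-- σ-algebra generated by the environment at times `≤ k`. -/
def sigmaLE {d : ℕ} (env : ℕ × (Fin d → ℤ) → Ω → ℝ) (k : ℕ) : MeasurableSpace Ω :=
  ⨆ p ∈ {p : ℕ × (Fin d → ℤ) | p.1 ≤ k}, MeasurableSpace.comap (env p) inferInstance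

/-- σ-algebra generated by the environment at times `> k`. -/
def sigmaGT {d : ℕ} (env : ℕ × (Fin d → ℤ) → Ω → ℝ) (k : ℕ) : MeasurableSpace Ω :=
  ⨆ p ∈ {p : ℕ × (Fin d → ℤ) | p.1 ≤ k}ᶜ, MeasurableSpace.comap (env p) inferInstance

lemma integrable_of_abs_le {P : Measure Ω} [IsProbabilityMeasure P] {f : Ω → ℝ} {C : ℝ}
    (hm : Measurable f) (hb : ∀ x, |f x| ≤ C) : Integrable f P :=
  ⟨hm.aestronglyMeasurable, HasFiniteIntegral.of_bounded (C := C) (ae_of_all _ hb)⟩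

lemma key_step {d : ℕ} (P : Measure Ω) [IsProbabilityMeasure P]
    (env : ℕ × (Fin d → ℤ) → Ω → ℝ) (henv : IsIIDEnv P env) (β : ℝ)
    (hd : 0 < d) {t ε : ℝ} (ht : 1 < t) (hε : 0 < ε) (k m : ℕ) {c : ℝ}
    (hc : ∀ m' : ℕ, c ≤ ∫ x, fE ε (W P env β m' x) ∂P)
    (A : Set Ω) (hA : MeasurableSet[sigmaLE env k] A)
    (hAsub : ∀ x ∈ A, t < W P env β k x) :
    c * (P A).toReal ≤ (P (A ∩ {x | t * ε < W P env β (k + m) x})).toReal := by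
  classical
  have hM1le : sigmaLE env k ≤ (inferInstance : MeasurableSpace Ω) :=
    iSup₂_le fun p _ => (henv.meas p).comap_le
  have hM2le : sigmaGT env k ≤ (inferInstance : MeasurableSpace Ω) :=
    iSup₂_le fun p _ => (henv.meas p).comap_le
  have hIndep : Indep (sigmaLE env k) (sigmaGT env k) P :=
    indep_biSup_compl (fun p => (henv.meas p).comap_le) henv.indep.iIndep
      {p : ℕ × (Fin d → ℤ) | p.1 ≤ k}
  -- abbreviations
  set Wk : Ω → ℝ := W P env β k with hWk
  set G : (Fin k → Fin d × Bool) → Ω → ℝ :=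
    fun σ => W P (shiftEnv k (walkPos σ k) env) β m with hG
  set Φ : (Fin k → Fin d × Bool) → Ω → ℝ :=
    fun σ => A.indicator (fun x => wgt P env β k σ x / Wk x) with hΦ
  have hWkpos : ∀ x, 0 < Wk x := fun x => W_pos P env β hd k x
  have hGpos : ∀ σ x, 0 < G σ x := fun σ x => W_pos P _ β hd m x
  -- measurability
  have hWm1 : ∀ j, j ≤ k → Measurable[sigmaLE env k] (W P env β j) := fun j hj =>
    measurable_W' P env β j fun i z h1 h2 =>
      measurable_env_biSup henv.meas (show (i, z) ∈ {p : ℕ × (Fin d → ℤ) | p.1 ≤ k}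
        from le_trans h2 hj)
  have hwgtm1 : ∀ σ, Measurable[sigmaLE env k] (wgt P env β k σ) := fun σ =>
    measurable_wgt P env β k σ fun i z h1 h2 =>
      measurable_env_biSup henv.meas (show (i, z) ∈ {p : ℕ × (Fin d → ℤ) | p.1 ≤ k} from h2)
  have hΦm1 : ∀ σ, Measurable[sigmaLE env k] (Φ σ) := fun σ =>
    ((hwgtm1 σ).div (hWm1 k le_rfl)).indicator hA
  have hGm2 : ∀ σ, Measurable[sigmaGT env k] (fun x => fE ε (G σ x)) := fun σ =>
    (measurable_fE ε).comp <|
      measurable_W' P (shiftEnv k (walkPos σ k) env) β m fun i z h1 h2 =>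
        measurable_env_biSup henv.meas
          (show (k + i, walkPos σ k + z) ∈ {p : ℕ × (Fin d → ℤ) | p.1 ≤ k}ᶜ from by
            simp only [Set.mem_compl_iff, Set.mem_setOf_eq, not_le]
            omega)
  have hΦmeas : ∀ σ, Measurable (Φ σ) := fun σ => (hΦm1 σ).mono hM1le le_rfl
  have hGmeas : ∀ σ, Measurable (fun x => fE ε (G σ x)) := fun σ =>
    (hGm2 σ).mono hM2le le_rfl
  have hAmeas : MeasurableSet A := hM1le _ hA
  -- independence
  have hIndepFun : ∀ σ, IndepFun (Φ σ) (fun x => fE ε (G σ x)) P := fun σ => by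
    rw [IndepFun_iff_Indep]
    exact indep_of_indep_of_le_right
      (indep_of_indep_of_le_left hIndep (hΦm1 σ).comap_le) (hGm2 σ).comap_le
  -- bounds
  have hΦnonneg : ∀ σ x, 0 ≤ Φ σ x := fun σ x =>
    Set.indicator_nonneg (fun x _ =>
      div_nonneg (wgt_pos P env β hd k σ x).le (hWkpos x).le) x
  have hwgt_le : ∀ σ x, wgt P env β k σ x ≤ Wk x := by
    intro σ x
    rw [hWk, ← sum_wgt P env β k x]
    exact Finset.single_le_sum (f := fun σ => wgt P env β k σ x)
      (fun σ _ => (wgt_pos P env β hd k σ x).le) (Finset.mem_univ σ)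
  have hΦle : ∀ σ x, Φ σ x ≤ 1 := by
    intro σ x
    simp only [hΦ]
    by_cases hx : x ∈ A
    · rw [Set.indicator_of_mem hx]
      exact div_le_one_of_le₀ (hwgt_le σ x) (hWkpos x).le
    · rw [Set.indicator_of_notMem hx]; exact zero_le_one
  have hΦabs : ∀ σ x, |Φ σ x| ≤ 1 := fun σ x =>
    abs_le.2 ⟨by linarith [hΦnonneg σ x], hΦle σ x⟩
  have hfEGabs : ∀ σ x, |fE ε (G σ x)| ≤ 1 := fun σ x => abs_fE_le_one hε (hGpos σ x).le
  -- integrability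
  have hΦint : ∀ σ, Integrable (Φ σ) P := fun σ =>
    integrable_of_abs_le (hΦmeas σ) (C := 1) (hΦabs σ)
  have hΦGabs : ∀ σ x, |Φ σ x * fE ε (G σ x)| ≤ Φ σ x := by
    intro σ x
    rw [abs_mul]
    calc |Φ σ x| * |fE ε (G σ x)| ≤ |Φ σ x| * 1 :=
          mul_le_mul_of_nonneg_left (hfEGabs σ x) (abs_nonneg _)
      _ = Φ σ x := by rw [mul_one, abs_of_nonneg (hΦnonneg σ x)]
  have hΦGint : ∀ σ, Integrable (fun x => Φ σ x * fE ε (G σ x)) P := fun σ =>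
    integrable_of_abs_le ((hΦmeas σ).mul (hGmeas σ)) (C := 1) fun x =>
      le_trans (hΦGabs σ x) (hΦle σ x)
  -- step 1 : factorization
  have step1 : ∀ σ, (∫ x, Φ σ x ∂P) * c ≤ ∫ x, Φ σ x * fE ε (G σ x) ∂P := by
    intro σ
    have hfact : ∫ x, Φ σ x * fE ε (G σ x) ∂P
        = (∫ x, Φ σ x ∂P) * ∫ x, fE ε (G σ x) ∂P :=
      IndepFun.integral_fun_mul_eq_mul_integral (hIndepFun σ) (hΦmeas σ).aestronglyMeasurable
        (hGmeas σ).aestronglyMeasurable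
    rw [hfact, hG]
    have hident : ∫ x, fE ε (W P (shiftEnv k (walkPos σ k) env) β m x) ∂P
        = ∫ x, fE ε (W P env β m x) ∂P :=
      integral_fE_W_shift P β henv ε k m (walkPos σ k)
    rw [hident]
    exact mul_le_mul_of_nonneg_left (hc m) (integral_nonneg (hΦnonneg σ))
  -- step 2 : sum of weights
  have step2 : ∀ x, ∑ σ : Fin k → Fin d × Bool, Φ σ x
      = A.indicator (fun _ => (1 : ℝ)) x := by
    intro x
    by_cases hx : x ∈ A
    · simp only [hΦ, Set.indicator_of_mem hx]
      rw [← Finset.sum_div, sum_wgt P env β k x, div_self (hWkpos x).ne']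
    · simp only [hΦ, Set.indicator_of_notMem hx, Finset.sum_const_zero]
  -- step 3 : total mass
  have step3 : ∑ σ : Fin k → Fin d × Bool, ∫ x, Φ σ x ∂P = (P A).toReal := by
    rw [← integral_finset_sum _ fun σ _ => hΦint σ]
    rw [integral_congr_ae (ae_of_all _ step2)]
    rw [integral_indicator_const (1 : ℝ) hAmeas]
    simp; rfl
  -- step 4 : Jensen + inclusion, pointwise
  set B : Set Ω := {x | t * ε < W P env β (k + m) x} with hB
  have step4 : ∀ x, ∑ σ : Fin k → Fin d × Bool, Φ σ x * fE ε (G σ x)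
      ≤ (A ∩ B).indicator (fun _ => (1 : ℝ)) x := by
    intro x
    by_cases hx : x ∈ A
    · have hsum1 : ∑ σ : Fin k → Fin d × Bool, wgt P env β k σ x / Wk x = 1 := by
        rw [← Finset.sum_div, sum_wgt P env β k x, div_self (hWkpos x).ne']
      have hjensen := (concaveOn_fE ε).le_map_sum (t := Finset.univ)
        (w := fun σ : Fin k → Fin d × Bool => wgt P env β k σ x / Wk x)
        (p := fun σ => G σ x)
        (fun σ _ => div_nonneg (wgt_pos P env β hd k σ x).le (hWkpos x).le)
        hsum1 (fun σ _ => Set.mem_univ _)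
      have hsumG : ∑ σ : Fin k → Fin d × Bool, (wgt P env β k σ x / Wk x) • G σ x
          = W P env β (k + m) x / Wk x := by
        rw [hG, hWk, W_decomp P env β henv k m x, Finset.sum_div]
        apply Finset.sum_congr rfl
        intro σ _
        rw [smul_eq_mul]
        ring
      rw [hsumG] at hjensen
      have hΦG : ∀ σ : Fin k → Fin d × Bool,
          Φ σ x * fE ε (G σ x) = (wgt P env β k σ x / Wk x) • fE ε (G σ x) := by
        intro σ
        simp only [hΦ, Set.indicator_of_mem hx, smul_eq_mul]
      rw [Finset.sum_congr rfl fun σ _ => hΦG σ]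
      by_cases hxB : x ∈ B
      · rw [Set.indicator_of_mem (Set.mem_inter hx hxB)]
        exact le_trans hjensen (fE_le_one _ _)
      · rw [Set.indicator_of_notMem (fun hmem => hxB hmem.2)]
        refine le_trans hjensen ?_
        by_contra hpos
        push_neg at hpos
        have h1 : ε < W P env β (k + m) x / Wk x := fE_pos_imp hε hpos
        have hWkt : t < Wk x := hAsub x hx
        have h2 : t * ε < W P env β (k + m) x := by
          have h3 : ε * Wk x ≤ W P env β (k + m) x :=
            (le_div_iff₀ (hWkpos x)).mp h1.le
          nlinarith
        exact hxB h2
    · have hz : ∀ σ : Fin k → Fin d × Bool, Φ σ x * fE ε (G σ x) = 0 := by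
        intro σ
        simp only [hΦ, Set.indicator_of_notMem hx, zero_mul]
      rw [Finset.sum_congr rfl fun σ _ => hz σ, Finset.sum_const_zero]
      rw [Set.indicator_of_notMem (fun hmem => hx hmem.1)]
  -- assemble
  have hBmeas : MeasurableSet B :=
    measurableSet_lt measurable_const
      (measurable_W' P env β (k + m) fun i z _ _ => henv.meas _)
  have hsumbd : ∀ x, |∑ σ : Fin k → Fin d × Bool, Φ σ x * fE ε (G σ x)| ≤ 1 := by
    intro x
    refine le_trans (Finset.abs_sum_le_sum_abs _ _) ?_
    calc ∑ σ : Fin k → Fin d × Bool, |Φ σ x * fE ε (G σ x)|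
        ≤ ∑ σ : Fin k → Fin d × Bool, Φ σ x := Finset.sum_le_sum fun σ _ => hΦGabs σ x
      _ = A.indicator (fun _ => (1:ℝ)) x := step2 x
      _ ≤ 1 := by
          by_cases hx : x ∈ A
          · rw [Set.indicator_of_mem hx]
          · rw [Set.indicator_of_notMem hx]; exact zero_le_one
  calc c * (P A).toReal = ∑ σ : Fin k → Fin d × Bool, (∫ x, Φ σ x ∂P) * c := by
        rw [← Finset.sum_mul, step3, mul_comm]
    _ ≤ ∑ σ : Fin k → Fin d × Bool, ∫ x, Φ σ x * fE ε (G σ x) ∂P :=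
        Finset.sum_le_sum fun σ _ => step1 σ
    _ = ∫ x, ∑ σ : Fin k → Fin d × Bool, Φ σ x * fE ε (G σ x) ∂P :=
        (integral_finset_sum _ fun σ _ => hΦGint σ).symm
    _ ≤ ∫ x, (A ∩ B).indicator (fun _ => (1 : ℝ)) x ∂P := by
        refine integral_mono (integrable_of_abs_le ?_ hsumbd) ?_ step4
        · exact Finset.measurable_sum _ fun σ _ => (hΦmeas σ).mul (hGmeas σ)
        · exact integrable_of_abs_le
            ((measurable_const (a := (1:ℝ))).indicator (hAmeas.inter hBmeas)) (C := 1)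
            fun x => by
              by_cases hx : x ∈ A ∩ B
              · rw [Set.indicator_of_mem hx]; simp
              · rw [Set.indicator_of_notMem hx]; simp
    _ = (P (A ∩ B)).toReal := by
        rw [integral_indicator_const (1 : ℝ) (hAmeas.inter hBmeas)]
        simp; rfl

end Key

lemma hitAbove_le_iff {g : ℕ → Ω → ℝ} {t : ℝ} {x : Ω} {n : ℕ} :
    hitAbove g t x ≤ (n : ℕ∞) ↔ ∃ k ≤ n, t < g k x := by
  constructor
  · intro h
    by_contra hc
    push_neg at hc
    have hlb : ((n : ℕ∞) + 1) ≤ hitAbove g t x := by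
      apply le_sInf
      rintro m ⟨k, rfl, hk⟩
      have hnk : n < k := by
        by_contra hk2
        push_neg at hk2
        exact absurd hk (not_lt.mpr (hc k hk2))
      have : ((n + 1 : ℕ) : ℕ∞) ≤ (k : ℕ∞) := by exact_mod_cast Nat.succ_le_of_lt hnk
      simpa using this
    have h2 := le_trans hlb h
    have : (n : ℕ∞) < (n : ℕ∞) + 1 :=
      (ENat.lt_add_one_iff (by simp)).mpr le_rfl
    exact absurd (lt_of_lt_of_le this h2) (lt_irrefl _)
  · rintro ⟨k, hk, hlt⟩
    refine le_trans (sInf_le ⟨k, rfl, hlt⟩) ?_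
    exact_mod_cast hk

variable (P : Measure Ω) [IsProbabilityMeasure P]

/-- Fix `t > 1` and `ε > 0`, let `τ := inf {n ≥ 0 : W_n > t}` and
`f_ε(x) := (x/ε - 1) ∧ 1`.  Then for every `n`,
`ℙ(W_n > t ε) ≥ ℙ(τ ≤ n) · inf_k E[f_ε(W_k)]`. -/
theorem tail_bound_via_concave_truncation
    {d : ℕ} (env : ℕ × (Fin d → ℤ) → Ω → ℝ) (henv : IsIIDEnv P env)
    {β : ℝ} (hβ : 0 < β)
    {t ε : ℝ} (ht : 1 < t) (hε : 0 < ε) (n : ℕ) :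
    (P {x | hitAbove (W P env β) t x ≤ (n : ℕ∞)}).toReal *
        (⨅ k : ℕ, ∫ x, min (W P env β k x / ε - 1) 1 ∂P) ≤
      (P {x | t * ε < W P env β n x}).toReal := by
  classical
  by_cases hd : 0 < d
  swap
  · -- degenerate case d = 0 : the hitting set is empty
    have hd0 : d = 0 := by omega
    subst hd0
    have hWle : ∀ k x, W P env β k x ≤ 1 := by
      intro k x
      rcases Nat.eq_zero_or_pos k with hk | hk
      · subst hk; rw [W_zero]
      · have : W P env β k x = 0 := by
          unfold W
          rw [show ((2 : ℝ) * (0 : ℕ)) = 0 by norm_num, inv_zero, zero_pow (by omega), zero_mul]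
        rw [this]; norm_num
    have hempty : {x | hitAbove (W P env β) t x ≤ (n : ℕ∞)} = ∅ := by
      ext x
      simp only [Set.mem_setOf_eq, Set.mem_empty_iff_false, iff_false]
      rw [hitAbove_le_iff]
      rintro ⟨k, _, hlt⟩
      exact absurd hlt (not_lt.mpr ((hWle k x).trans ht.le))
    rw [hempty]
    simp
  -- main case
  set c : ℝ := ⨅ k : ℕ, ∫ x, min (W P env β k x / ε - 1) 1 ∂P with hc_def
  have hWmeas : ∀ j, Measurable (W P env β j) := fun j =>
    measurable_W' P env β j fun i z _ _ => henv.meas _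
  have hint : ∀ k : ℕ, Integrable (fun x => fE ε (W P env β k x)) P := fun k =>
    integrable_of_abs_le ((measurable_fE ε).comp (hWmeas k))
      (C := 1) fun x => abs_fE_le_one hε (W_pos P env β hd k x).le
  have hbdd : BddBelow (Set.range fun k : ℕ => ∫ x, min (W P env β k x / ε - 1) 1 ∂P) := by
    refine ⟨-1, ?_⟩
    rintro r ⟨k, rfl⟩
    have h1 : ∫ x, (-1 : ℝ) ∂P ≤ ∫ x, fE ε (W P env β k x) ∂P :=
      integral_mono (integrable_const _) (hint k)
        (fun x => neg_one_le_fE hε (W_pos P env β hd k x).le)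
    simp only [integral_const, probReal_univ, smul_eq_mul, one_mul] at h1
    exact h1
  have hc : ∀ m' : ℕ, c ≤ ∫ x, fE ε (W P env β m' x) ∂P := fun m' => ciInf_le hbdd m'
  -- the sets A k
  set A : ℕ → Set Ω := fun k =>
    {x | t < W P env β k x ∧ ∀ j < k, W P env β j x ≤ t} with hA_def
  have hAM1 : ∀ k, MeasurableSet[sigmaLE env k] (A k) := by
    intro k
    have hWm1 : ∀ j, j ≤ k → Measurable[sigmaLE env k] (W P env β j) := fun j hj =>
      measurable_W' P env β j fun i z h1 h2 =>
        measurable_env_biSup henv.meas (show (i, z) ∈ {p : ℕ × (Fin d → ℤ) | p.1 ≤ k}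
          from le_trans h2 hj)
    have heq : A k = {x | t < W P env β k x}
        ∩ ⋂ j, ⋂ (_ : j < k), {x | W P env β j x ≤ t} := by
      ext x
      simp [hA_def, Set.mem_iInter]
    rw [heq]
    exact (measurableSet_lt measurable_const (hWm1 k le_rfl)).inter
      (MeasurableSet.iInter fun j => MeasurableSet.iInter fun hj =>
        measurableSet_le (hWm1 j hj.le) measurable_const)
  have hAmeas : ∀ k, MeasurableSet (A k) := fun k =>
    (iSup₂_le fun p _ => (henv.meas p).comap_le : sigmaLE env k ≤ _) _ (hAM1 k)
  have hAsub : ∀ k, ∀ x ∈ A k, t < W P env β k x := fun k x hx => hx.1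
  -- the union equality
  have hunion : {x | hitAbove (W P env β) t x ≤ (n : ℕ∞)}
      = ⋃ k ∈ Finset.range (n + 1), A k := by
    ext x
    simp only [Set.mem_setOf_eq, Set.mem_iUnion, Finset.mem_range]
    rw [hitAbove_le_iff]
    constructor
    · rintro ⟨k, hk, hlt⟩
      have hex : ∃ j, t < W P env β j x := ⟨k, hlt⟩
      refine ⟨Nat.find hex, ?_, Nat.find_spec hex, fun j hj => ?_⟩
      · have := Nat.find_min' hex hlt
        omega
      · exact not_lt.mp (Nat.find_min hex hj)
    · rintro ⟨k, hk, hlt, _⟩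
      exact ⟨k, by omega, hlt⟩
  have hdisj : (↑(Finset.range (n + 1)) : Set ℕ).PairwiseDisjoint A := by
    intro a _ b _ hab
    refine Set.disjoint_left.mpr fun x hxa hxb => ?_
    rcases Nat.lt_or_ge a b with h | h
    · exact absurd hxa.1 (not_lt.mpr (hxb.2 a h))
    · have h2 : b < a := by omega
      exact absurd hxb.1 (not_lt.mpr (hxa.2 b h2))
  set B : Set Ω := {x | t * ε < W P env β n x} with hB_def
  have hBmeas : MeasurableSet B := measurableSet_lt measurable_const (hWmeas n)
  have hmeasure : P {x | hitAbove (W P env β) t x ≤ (n : ℕ∞)}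
      = ∑ k ∈ Finset.range (n + 1), P (A k) := by
    rw [hunion]
    exact measure_biUnion_finset hdisj fun k _ => hAmeas k
  have htotR : (P {x | hitAbove (W P env β) t x ≤ (n : ℕ∞)}).toReal
      = ∑ k ∈ Finset.range (n + 1), (P (A k)).toReal := by
    rw [hmeasure, ENNReal.toReal_sum fun k _ => measure_ne_top P _]
  -- apply key_step for each k
  have hkey : ∀ k ∈ Finset.range (n + 1),
      c * (P (A k)).toReal ≤ (P (A k ∩ B)).toReal := by
    intro k hk
    have hkn : k ≤ n := by
      simp only [Finset.mem_range] at hk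
      omega
    have := key_step P env henv β hd ht hε k (n - k) hc (A k) (hAM1 k) (hAsub k)
    rwa [show k + (n - k) = n by omega] at this
  -- sum up
  have hsum2 : ∑ k ∈ Finset.range (n + 1), (P (A k ∩ B)).toReal ≤ (P B).toReal := by
    have hdisj2 : (↑(Finset.range (n + 1)) : Set ℕ).PairwiseDisjoint
        (fun k => A k ∩ B) := by
      intro a ha b hb hab
      exact Set.disjoint_of_subset Set.inter_subset_left Set.inter_subset_left
        (hdisj ha hb hab)
    have h1 : ∑ k ∈ Finset.range (n + 1), P (A k ∩ B)
        = P (⋃ k ∈ Finset.range (n + 1), A k ∩ B) :=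
      (measure_biUnion_finset hdisj2 fun k _ => (hAmeas k).inter hBmeas).symm
    have h2 : P (⋃ k ∈ Finset.range (n + 1), A k ∩ B) ≤ P B :=
      measure_mono (Set.iUnion₂_subset fun k _ => Set.inter_subset_right)
    calc ∑ k ∈ Finset.range (n + 1), (P (A k ∩ B)).toReal
        = (∑ k ∈ Finset.range (n + 1), P (A k ∩ B)).toReal :=
          (ENNReal.toReal_sum fun k _ => measure_ne_top P _).symm
      _ ≤ (P B).toReal := by
          rw [h1]
          exact ENNReal.toReal_mono (measure_ne_top P _) h2
  calc (P {x | hitAbove (W P env β) t x ≤ (n : ℕ∞)}).toReal * c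
      = ∑ k ∈ Finset.range (n + 1), c * (P (A k)).toReal := by
        rw [htotR, Finset.sum_mul]
        exact Finset.sum_congr rfl fun k _ => mul_comm _ _
    _ ≤ ∑ k ∈ Finset.range (n + 1), (P (A k ∩ B)).toReal :=
        Finset.sum_le_sum hkey
    _ ≤ (P B).toReal := hsum2


end DirectedPolymer
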